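/- Let E be a real inner product space, let θ > 0, λ₁ > 1/2, λ₂ > 2 + 1/(2θ), D ≥ 0, R ≥ 0, D_υ ≥ 0, and set κ = 2·min(λ₁ − 1/2, λ₂ − 2 − 1/(2θ)), c̃ = D² + 2θR², and μ = (2 + λ₁² − λ₁√(λ₁² + 4))/4. Let x₁, x₂, y₁, y₂ : [0,∞) → E be differentiable curves and δ₁, δ₂, r₁, r₂, υ, υ′ : [0,∞) → E be functions with ‖δ₁(t)‖ ≤ D, ‖δ₂(t)‖ ≤ D, ‖r₁(t)‖ ≤ R, ‖r₂(t)‖ ≤ R, and ‖υ(t) − υ′(t)‖ ≤ D_υ for all t ≥ 0, such that for all t ≥ 0: x₁′(t) = x₂(t), x₂′(t) = δ₁(t) − (λ₁ + λ₂)x₂(t) − λ₁λ₂x₁(t) + υ(t) + r₁(t), y₁′(t) = y₂(t), y₂′(t) = δ₂(t) − (λ₁ + λ₂)y₂(t) − λ₁λ₂y₁(t) + υ′(t) + r₂(t). Define W(t) = (1/2)‖x₁(t) − y₁(t)‖² + (1/2)‖x₂(t) + λ₁x₁(t) − y₂(t) − λ₁y₁(t)‖². Then for all t ≥ 0: (a)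 W(t) ≤ e^{−κt}·W(0) + ((1/2)D_υ² + c̃)/κ, and (b) ‖x₁(t) − y₁(t)‖² + ‖x₂(t) − y₂(t)‖² ≤ (1/μ)·(e^{−κt}·W(0) + ((1/2)D_υ² + c̃)/κ). -/

import Mathlib

open scoped RealInnerProductSpace


private lemma deltaISpS_aux_sqrt {l₁ : ℝ} (hl : 1 / 2 < l₁) :
    0 ≤ Real.sqrt (l₁ ^ 2 + 4) ∧ l₁ ≤ Real.sqrt (l₁ ^ 2 + 4) ∧
      (Real.sqrt (l₁ ^ 2 + 4)) ^ 2 = l₁ ^ 2 + 4 := by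
  have h0 : (0:ℝ) < l₁ := by linarith
  have hs2 : (Real.sqrt (l₁ ^ 2 + 4)) ^ 2 = l₁ ^ 2 + 4 := Real.sq_sqrt (by positivity)
  have hs0 : 0 ≤ Real.sqrt (l₁ ^ 2 + 4) := Real.sqrt_nonneg _
  exact ⟨hs0, by nlinarith [hs2, hs0], hs2⟩

private lemma deltaISpS_aux_mu_pos {l₁ : ℝ} (hl : 1 / 2 < l₁) :
    0 < (2 + l₁ ^ 2 - l₁ * Real.sqrt (l₁ ^ 2 + 4)) / 4 := by
  obtain ⟨hs0, hsl, hs2⟩ := deltaISpS_aux_sqrt hl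
  have h0 : (0:ℝ) < l₁ := by linarith
  set s := Real.sqrt (l₁ ^ 2 + 4)
  have hQ : 0 < 2 + l₁ ^ 2 + l₁ * s := by positivity
  have hPQ : (2 + l₁ ^ 2 - l₁ * s) * (2 + l₁ ^ 2 + l₁ * s) = 4 := by nlinarith [hs2]
  nlinarith [hQ, hPQ]

private lemma deltaISpS_aux_lower {l₁ A B c : ℝ} (hl : 1 / 2 < l₁) (hA : 0 ≤ A)
    (hB : 0 ≤ B) (hc : -(B * A) ≤ c) :
    (2 + l₁ ^ 2 - l₁ * Real.sqrt (l₁ ^ 2 + 4)) / 4 * (A ^ 2 + B ^ 2) ≤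
      1 / 2 * A ^ 2 + 1 / 2 * (B ^ 2 + 2 * (l₁ * c) + l₁ ^ 2 * A ^ 2) := by
  obtain ⟨hs0, hsl, hs2⟩ := deltaISpS_aux_sqrt hl
  have h0 : (0:ℝ) < l₁ := by linarith
  set s := Real.sqrt (l₁ ^ 2 + 4)
  have hsp : 0 < s + l₁ := by linarith
  have hkey : 4 * (A * B) ≤ (s + l₁) * A ^ 2 + (s - l₁) * B ^ 2 := by
    nlinarith [sq_nonneg ((s + l₁) * A - 2 * B), hs2, sq_nonneg B, mul_pos hsp hsp,
      sq_nonneg A]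
  have hcross : -(l₁ * (B * A)) ≤ l₁ * c := by
    have := mul_le_mul_of_nonneg_left hc (le_of_lt h0)
    linarith
  nlinarith [hkey, hcross, h0]

set_option maxHeartbeats 1000000 in
/-- Trajectory-level δ-ISpS conclusion of Theorem 2: exponential decay of the
Lyapunov function and of the squared distance between the two closed-loop
trajectories, up to the practical offset. -/
theorem deltaISpS_trajectory_estimate
    {E : Type*} [NormedAddCommGroup E] [InnerProductSpace ℝ E]
    (θ l₁ l₂ D R Dυ κ ct μ : ℝ)
    (hθ : 0 < θ) (hl₁ : 1 / 2 < l₁) (hl₂ : 2 + 1 / (2 * θ) < l₂)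
    (hD : 0 ≤ D) (hR : 0 ≤ R) (hDυ : 0 ≤ Dυ)
    (hκ : κ = 2 * min (l₁ - 1 / 2) (l₂ - 2 - 1 / (2 * θ)))
    (hct : ct = D ^ 2 + 2 * θ * R ^ 2)
    (hμ : μ = (2 + l₁ ^ 2 - l₁ * Real.sqrt (l₁ ^ 2 + 4)) / 4)
    (x₁ x₂ y₁ y₂ δ₁ δ₂ r₁ r₂ υ υ' : ℝ → E)
    (hδ₁ : ∀ t, 0 ≤ t → ‖δ₁ t‖ ≤ D) (hδ₂ : ∀ t, 0 ≤ t → ‖δ₂ t‖ ≤ D)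
    (hr₁ : ∀ t, 0 ≤ t → ‖r₁ t‖ ≤ R) (hr₂ : ∀ t, 0 ≤ t → ‖r₂ t‖ ≤ R)
    (hυ : ∀ t, 0 ≤ t → ‖υ t - υ' t‖ ≤ Dυ)
    (hx₁ : ∀ t, 0 ≤ t → HasDerivAt x₁ (x₂ t) t)
    (hx₂ : ∀ t, 0 ≤ t → HasDerivAt x₂
      (δ₁ t - (l₁ + l₂) • x₂ t - (l₁ * l₂) • x₁ t + υ t + r₁ t) t)
    (hy₁ : ∀ t, 0 ≤ t → HasDerivAt y₁ (y₂ t) t)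
    (hy₂ : ∀ t, 0 ≤ t → HasDerivAt y₂
      (δ₂ t - (l₁ + l₂) • y₂ t - (l₁ * l₂) • y₁ t + υ' t + r₂ t) t)
    (W : ℝ → ℝ)
    (hW : W = fun t => (1 / 2) * ‖x₁ t - y₁ t‖ ^ 2
      + (1 / 2) * ‖x₂ t + l₁ • x₁ t - y₂ t - l₁ • y₁ t‖ ^ 2) :
    ∀ t, 0 ≤ t →
      (W t ≤ Real.exp (-κ * t) * W 0 + ((1 / 2) * Dυ ^ 2 + ct) / κ) ∧
      (‖x₁ t - y₁ t‖ ^ 2 + ‖x₂ t - y₂ t‖ ^ 2 ≤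
        (1 / μ) * (Real.exp (-κ * t) * W 0 + ((1 / 2) * Dυ ^ 2 + ct) / κ)) := by

  -- abbreviations
  intro t ht
  have hl₁0 : (0:ℝ) < l₁ := lt_trans (by norm_num) hl₁
  have h2θ : (0:ℝ) < 2 * θ := by linarith
  have hκ1 : κ ≤ 2 * (l₁ - 1 / 2) := by
    rw [hκ]; have := min_le_left (l₁ - 1 / 2) (l₂ - 2 - 1 / (2 * θ)); linarith
  have hκ2 : κ ≤ 2 * (l₂ - 2 - 1 / (2 * θ)) := by
    rw [hκ]; have := min_le_right (l₁ - 1 / 2) (l₂ - 2 - 1 / (2 * θ)); linarith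
  have hκpos : 0 < κ := by
    rw [hκ]
    have h1 : 0 < l₁ - 1 / 2 := by linarith
    have h2 : 0 < l₂ - 2 - 1 / (2 * θ) := by linarith
    have := lt_min h1 h2
    linarith
  set ε : ℝ := (1 / 2) * Dυ ^ 2 + ct with hε
  have hεnn : 0 ≤ ε := by
    rw [hε, hct]; positivity
  -- error signals
  set E₁ : ℝ → E := fun s => x₁ s - y₁ s with hE₁
  set E₂ : ℝ → E := fun s => x₂ s + l₁ • x₁ s - y₂ s - l₁ • y₁ s with hE₂
  have hWfun : W = fun s => (1 / 2) * ⟪E₁ s, E₁ s⟫ + (1 / 2) * ⟪E₂ s, E₂ s⟫ := by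
    rw [hW]; funext s
    rw [real_inner_self_eq_norm_sq, real_inner_self_eq_norm_sq]
  -- derivatives of error signals
  have hE₁d : ∀ s, 0 ≤ s → HasDerivAt E₁ (E₂ s - l₁ • E₁ s) s := by
    intro s hs
    have h := (hx₁ s hs).sub (hy₁ s hs)
    convert h using 1
    · rfl
    simp only [hE₁, hE₂]
    module
  have hE₂d : ∀ s, 0 ≤ s →
      HasDerivAt E₂ ((δ₁ s - δ₂ s) + (υ s - υ' s) + (r₁ s - r₂ s) - l₂ • E₂ s) s := by
    intro s hs
    have h := (((hx₂ s hs).add ((hx₁ s hs).const_smul l₁)).sub (hy₂ s hs)).sub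
      ((hy₁ s hs).const_smul l₁)
    convert h using 1
    · rfl
    simp only [hE₂]
    module
  -- derivative of W
  set W' : ℝ → ℝ := fun s =>
    ⟪E₁ s, E₂ s - l₁ • E₁ s⟫ +
      ⟪E₂ s, (δ₁ s - δ₂ s) + (υ s - υ' s) + (r₁ s - r₂ s) - l₂ • E₂ s⟫ with hW'
  have hWd : ∀ s, 0 ≤ s → HasDerivAt W (W' s) s := by
    intro s hs
    rw [hWfun]
    have h1 := ((hE₁d s hs).inner ℝ (hE₁d s hs)).const_mul (1 / 2 : ℝ)
    have h2 := ((hE₂d s hs).inner ℝ (hE₂d s hs)).const_mul (1 / 2 : ℝ)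
    convert h1.add h2 using 1
    · rfl
    · rfl
    · rfl
    rw [hW']
    rw [real_inner_comm (E₁ s) (E₂ s - l₁ • E₁ s),
      real_inner_comm (E₂ s) ((δ₁ s - δ₂ s) + (υ s - υ' s) + (r₁ s - r₂ s) - l₂ • E₂ s)]
    ring
  -- the differential inequality
  have hbound : ∀ s, 0 ≤ s → W' s ≤ -κ * W s + ε := by
    intro s hs
    set a : ℝ := ‖E₁ s‖ with ha
    set b : ℝ := ‖E₂ s‖ with hb
    have ha0 : 0 ≤ a := norm_nonneg _
    have hb0 : 0 ≤ b := norm_nonneg _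
    have hWs : W s = (1 / 2) * a ^ 2 + (1 / 2) * b ^ 2 := by
      rw [hWfun]; simp only []
      rw [real_inner_self_eq_norm_sq, real_inner_self_eq_norm_sq]
    have hW's : W' s = ⟪E₁ s, E₂ s⟫ - l₁ * a ^ 2 +
        (⟪E₂ s, δ₁ s - δ₂ s⟫ + ⟪E₂ s, υ s - υ' s⟫ + ⟪E₂ s, r₁ s - r₂ s⟫ - l₂ * b ^ 2) := by
      simp only [hW', inner_sub_right, inner_add_right, real_inner_smul_right,
        real_inner_self_eq_norm_sq] <;> ring
    have h1 : ⟪E₁ s, E₂ s⟫ ≤ a * b := real_inner_le_norm _ _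
    have h2 : ⟪E₂ s, δ₁ s - δ₂ s⟫ ≤ b * (2 * D) := by
      refine le_trans (real_inner_le_norm _ _) ?_
      have : ‖δ₁ s - δ₂ s‖ ≤ 2 * D := by
        have := norm_sub_le (δ₁ s) (δ₂ s)
        have h1 := hδ₁ s hs; have h2 := hδ₂ s hs; linarith
      exact mul_le_mul_of_nonneg_left this hb0
    have h3 : ⟪E₂ s, υ s - υ' s⟫ ≤ b * Dυ := by
      refine le_trans (real_inner_le_norm _ _) ?_
      exact mul_le_mul_of_nonneg_left (hυ s hs) hb0
    have h4 : ⟪E₂ s, r₁ s - r₂ s⟫ ≤ b * (2 * R) := by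
      refine le_trans (real_inner_le_norm _ _) ?_
      have : ‖r₁ s - r₂ s‖ ≤ 2 * R := by
        have := norm_sub_le (r₁ s) (r₂ s)
        have h1 := hr₁ s hs; have h2 := hr₂ s hs; linarith
      exact mul_le_mul_of_nonneg_left this hb0
    -- Young's inequalities
    have hy1 : a * b ≤ (1 / 2) * a ^ 2 + (1 / 2) * b ^ 2 := by nlinarith [sq_nonneg (a - b)]
    have hy2 : b * (2 * D) ≤ b ^ 2 + D ^ 2 := by nlinarith [sq_nonneg (b - D)]
    have hy3 : b * Dυ ≤ (1 / 2) * b ^ 2 + (1 / 2) * Dυ ^ 2 := by nlinarith [sq_nonneg (b - Dυ)]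
    have hy4 : b * (2 * R) ≤ b ^ 2 / (2 * θ) + 2 * θ * R ^ 2 := by
      rw [div_add' _ _ _ (ne_of_gt h2θ), le_div_iff₀ h2θ]
      nlinarith [sq_nonneg (b - 2 * θ * R)]
    have hk1 : -κ * ((1 / 2) * a ^ 2) ≥ -(l₁ - 1 / 2) * a ^ 2 := by
      nlinarith [mul_le_mul_of_nonneg_right hκ1 (sq_nonneg a)]
    have hk2 : -κ * ((1 / 2) * b ^ 2) ≥ -(l₂ - 2 - 1 / (2 * θ)) * b ^ 2 := by
      nlinarith [mul_le_mul_of_nonneg_right hκ2 (sq_nonneg b)]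
    rw [hW's, hWs, hε, hct]
    have hb2θ : b ^ 2 / (2 * θ) = (1 / (2 * θ)) * b ^ 2 := by ring
    rw [hb2θ] at hy4
    linarith
  -- Gronwall on [0, t]
  have hcont : ContinuousOn W (Set.Icc 0 t) := fun s hs =>
    ((hWd s hs.1).continuousAt).continuousWithinAt
  have hslope : ∀ x ∈ Set.Ico (0:ℝ) t, ∀ r, W' x < r →
      ∃ᶠ z in nhdsWithin x (Set.Ioi x), (z - x)⁻¹ * (W z - W x) < r := by
    intro x hx r hr
    have h := ((hWd x hx.1).hasDerivWithinAt).liminf_right_slope_le hr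
    simpa [slope_def_field, div_eq_inv_mul] using h
  have hgron : W t ≤ gronwallBound (W 0) (-κ) ε (t - 0) :=
    le_gronwallBound_of_liminf_deriv_right_le (f := W) (f' := W') (K := -κ) (ε := ε)
      hcont hslope le_rfl (fun s hs => by have := hbound s hs.1; linarith)
      t ⟨ht, le_rfl⟩
  have hκne : (-κ : ℝ) ≠ 0 := neg_ne_zero.2 (ne_of_gt hκpos)
  rw [sub_zero] at hgron
  rw [gronwallBound_of_K_ne_0 hκne] at hgron
  have hgron' : W t ≤ W 0 * Real.exp (-κ * t) + ε / -κ * (Real.exp (-κ * t) - 1) := hgron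
  have hexp0 : (0:ℝ) < Real.exp (-κ * t) := Real.exp_pos _
  have hεκ : 0 ≤ ε / κ := div_nonneg hεnn (le_of_lt hκpos)
  have heq : ε / -κ * (Real.exp (-κ * t) - 1) = ε / κ * (1 - Real.exp (-κ * t)) := by
    field_simp
    ring
  rw [heq] at hgron'
  have hfinal : ε / κ * (1 - Real.exp (-κ * t)) ≤ ε / κ := by
    have h1e : 1 - Real.exp (-κ * t) ≤ 1 := by linarith
    calc ε / κ * (1 - Real.exp (-κ * t)) ≤ ε / κ * 1 :=
          mul_le_mul_of_nonneg_left h1e hεκ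
      _ = ε / κ := mul_one _
  have parta : W t ≤ Real.exp (-κ * t) * W 0 + ε / κ := by
    have hcomm : W 0 * Real.exp (-κ * t) = Real.exp (-κ * t) * W 0 := mul_comm _ _
    linarith [hgron', hfinal, hcomm]
  refine ⟨parta, ?_⟩
  -- part (b): lower bound on W in terms of the squared distance
  have hμpos : 0 < μ := by rw [hμ]; exact deltaISpS_aux_mu_pos hl₁
  set u : E := x₁ t - y₁ t with hu
  set v : E := x₂ t - y₂ t with hv
  have h2 : x₂ t + l₁ • x₁ t - y₂ t - l₁ • y₁ t = v + l₁ • u := by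
    rw [hu, hv]; module
  have hWt : W t = (1 / 2) * ‖u‖ ^ 2 + (1 / 2) * ‖v + l₁ • u‖ ^ 2 := by
    calc W t = (1 / 2) * ‖x₁ t - y₁ t‖ ^ 2
        + (1 / 2) * ‖x₂ t + l₁ • x₁ t - y₂ t - l₁ • y₁ t‖ ^ 2 := by rw [hW]
      _ = (1 / 2) * ‖u‖ ^ 2 + (1 / 2) * ‖v + l₁ • u‖ ^ 2 := by rw [h2, ← hu]
  have hnorm : ‖v + l₁ • u‖ ^ 2 = ‖v‖ ^ 2 + 2 * (l₁ * ⟪v, u⟫) + l₁ ^ 2 * ‖u‖ ^ 2 := by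
    rw [norm_add_sq_real, real_inner_smul_right, norm_smul, mul_pow,
      Real.norm_eq_abs, sq_abs] <;> ring
  have hA0 : 0 ≤ ‖u‖ := norm_nonneg _
  have hB0 : 0 ≤ ‖v‖ := norm_nonneg _
  have hinner : -(‖v‖ * ‖u‖) ≤ ⟪v, u⟫ := by
    have h := abs_real_inner_le_norm v u
    linarith [abs_le.1 h]
  have hlower : μ * (‖u‖ ^ 2 + ‖v‖ ^ 2) ≤ W t := by
    rw [hWt, hnorm, hμ]
    exact deltaISpS_aux_lower hl₁ hA0 hB0 hinner
  rw [one_div, ← div_eq_inv_mul, le_div_iff₀ hμpos]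
  calc (‖u‖ ^ 2 + ‖v‖ ^ 2) * μ = μ * (‖u‖ ^ 2 + ‖v‖ ^ 2) := by ring
    _ ≤ W t := hlower
    _ ≤ _ := parta
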